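/- Let C be the ideal of the polynomial ring K[C] generated by the binomials coming from a cyclic distributive lattice with r squares (a chain of r disjoint 'diamond' sublattices joined by cut edges). Then this ideal is generated by a regular sequence of r homogeneous quadrics, and hence the Castelnuovo–Mumford regularity of K[C]/I_C equals r. -/

import Mathlib

set_option maxHeartbeats 1000000
set_option synthInstance.maxHeartbeats 400000

/-- A minimal graded free resolution of the cyclic module `S/I` over the polynomial
ring `S = K[x_i]`, recorded through ranks, twists, differentials and an augmentation. -/
structure MinimalGradedFreeResolution {σ K : Type*} [Field K]
    (I : Ideal (MvPolynomial σ K)) where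
  rank : ℕ → ℕ
  twist : (i : ℕ) → Fin (rank i) → ℕ
  d : (i : ℕ) → ((Fin (rank (i + 1)) →₀ MvPolynomial σ K) →ₗ[MvPolynomial σ K]
        (Fin (rank i) →₀ MvPolynomial σ K))
  aug : (Fin (rank 0) →₀ MvPolynomial σ K) →ₗ[MvPolynomial σ K]
        (MvPolynomial σ K ⧸ I)
  rank_zero : rank 0 = 1
  twist_zero : ∀ k, twist 0 k = 0
  aug_surjective : Function.Surjective aug
  exact_zero : LinearMap.range (d 0) = LinearMap.ker aug
  exact : ∀ i, LinearMap.range (d (i + 1)) = LinearMap.ker (d i)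
  graded : ∀ i (k : Fin (rank (i + 1))) (l : Fin (rank i)),
      ∃ m, (d i (Finsupp.single k 1) l).IsHomogeneous m ∧
        twist (i + 1) k = twist i l + m
  minimal : ∀ i (k : Fin (rank (i + 1))) (l : Fin (rank i)),
      MvPolynomial.coeff 0 (d i (Finsupp.single k 1) l) = 0

/-- `S/I` has Castelnuovo–Mumford regularity `r`: in the minimal graded free
resolution the maximum of `twist - homological degree` equals `r`. -/
def HasRegularity {σ K : Type*} [Field K] (I : Ideal (MvPolynomial σ K)) (r : ℕ) : Prop :=
  ∃ F : MinimalGradedFreeResolution I,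
    (∀ i (k : Fin (F.rank i)), F.twist i k ≤ i + r) ∧
    (∃ i, ∃ k : Fin (F.rank i), F.twist i k = i + r)

open MvPolynomial

open Finsupp


theorem binom_regular {τ : Type*} {B : Type*} [CommRing B] {a b c d : τ}
    (hab : a ≠ b) (hac : a ≠ c) (hdb : d ≠ b) (hdc : d ≠ c) (hbc : b ≠ c)
    {p : MvPolynomial τ B}
    (h : (X b * X c - X a * X d) * p = 0) : p = 0 := by
  by_contra hp
  classical
  set w : (τ →₀ ℕ) → ℕ := fun m => m b + m c with hw
  have hsupp : p.support.Nonempty := support_nonempty.mpr hp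
  obtain ⟨m0, hm0, hm0w⟩ := Finset.exists_mem_eq_sup p.support hsupp w
  set N := p.support.sup w with hN
  have hmax : ∀ m ∈ p.support, w m ≤ N := fun m hm => Finset.le_sup hm
  set u : τ →₀ ℕ := Finsupp.single b 1 + Finsupp.single c 1 with hu
  set u' : τ →₀ ℕ := Finsupp.single a 1 + Finsupp.single d 1 with hu'
  have hXbc : (X b * X c : MvPolynomial τ B) = monomial u 1 := by
    rw [hu, ← one_mul (1 : B), ← monomial_mul]
    rfl
  have hXad : (X a * X d : MvPolynomial τ B) = monomial u' 1 := by
    rw [hu', ← one_mul (1 : B), ← monomial_mul]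
    rfl
  have hc1 : coeff (u + m0) (monomial u (1:B) * p) = coeff m0 p := by
    rw [coeff_monomial_mul, one_mul]
  have hc2 : coeff (u + m0) (monomial u' (1:B) * p) = 0 := by
    rw [coeff_monomial_mul']
    split_ifs with hle
    · rw [one_mul]
      apply MvPolynomial.notMem_support_iff.mp
      intro hmem
      have hb : (u + m0 - u') b = 1 + m0 b := by
        rw [Finsupp.tsub_apply, Finsupp.add_apply]
        simp [hu, hu', Finsupp.single_apply, hab, hdb, hbc, hbc.symm]
      have hcc : (u + m0 - u') c = 1 + m0 c := by
        rw [Finsupp.tsub_apply, Finsupp.add_apply]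
        simp [hu, hu', Finsupp.single_apply, hac, hdc, hbc, hbc.symm]
      have := hmax _ hmem
      rw [hw] at this
      simp only [hb, hcc] at this
      have hNval : N = m0 b + m0 c := by rw [hm0w]
      omega
    · rfl
  have : coeff (u + m0) ((X b * X c - X a * X d) * p) = coeff m0 p := by
    rw [sub_mul, coeff_sub, hXbc, hXad, hc1, hc2, sub_zero]
  rw [h, coeff_zero] at this
  exact (MvPolynomial.mem_support_iff.mp hm0) this.symm

theorem quot_reg {σ K : Type*} [CommRing K] {a b c d : σ}
    (hab : a ≠ b) (hac : a ≠ c) (had : a ≠ d) (hbc : b ≠ c) (hbd : b ≠ d) (hcd : c ≠ d)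
    (T : Set (MvPolynomial σ K))
    (hT : ∀ t ∈ T, ∃ u : MvPolynomial (↥({a,b,c,d} : Set σ)ᶜ) K,
        t = rename Subtype.val u)
    {s : MvPolynomial σ K}
    (h : (X b * X c - X a * X d) * s ∈ Ideal.span T) : s ∈ Ideal.span T := by
  classical
  set S : Set σ := {a, b, c, d} with hS
  set ι : Fin 4 → σ := ![a, b, c, d] with hι
  have hιinj : Function.Injective ι := by
    intro i j hij
    fin_cases i <;> fin_cases j <;> simp_all [hι] <;>
      first | rfl | exact absurd hij (by assumption) | exact absurd hij.symm (by assumption)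
  have hrange : Set.range ι = S := by
    ext x
    constructor
    · rintro ⟨i, rfl⟩; fin_cases i <;> simp [hι, hS]
    · intro hx
      rcases hx with h1 | h1 | h1 | h1
      · exact ⟨0, by simp [hι, h1]⟩
      · exact ⟨1, by simp [hι, h1]⟩
      · exact ⟨2, by simp [hι, h1]⟩
      · exact ⟨3, by simp [hι, show x = d from h1]⟩
  set e4 : Fin 4 ≃ ↥S := (Equiv.ofInjective ι hιinj).trans (Equiv.setCongr hrange) with he4d
  have he4 : ∀ i, ((e4 i : ↥S) : σ) = ι i := fun i => rfl
  set e : (Fin 4 ⊕ ↥Sᶜ) ≃ σ := (e4.sumCongr (Equiv.refl _)).trans (Equiv.Set.sumCompl S) with he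
  have heinl : ∀ i, e (Sum.inl i) = ι i := by
    intro i; simp [he, Equiv.Set.sumCompl_apply_inl, he4]
  have heinr : ∀ x : ↥Sᶜ, e (Sum.inr x) = (x : σ) := by
    intro x; simp [he, Equiv.Set.sumCompl_apply_inr]
  set C' := MvPolynomial (↥Sᶜ) K with hC'
  set Φ : MvPolynomial σ K ≃ₐ[K] MvPolynomial (Fin 4) C' :=
    (renameEquiv K e.symm).trans (sumAlgEquiv K (Fin 4) ↥Sᶜ) with hΦ
  have hsum : ∀ q : MvPolynomial (Fin 4 ⊕ ↥Sᶜ) K,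
      sumAlgEquiv K (Fin 4) ↥Sᶜ q = sumToIter K (Fin 4) ↥Sᶜ q := fun q => by
    have hext : ((sumAlgEquiv K (Fin 4) ↥Sᶜ : MvPolynomial (Fin 4 ⊕ ↥Sᶜ) K ≃ₐ[K] _) :
        MvPolynomial (Fin 4 ⊕ ↥Sᶜ) K →+* MvPolynomial (Fin 4) (MvPolynomial (↥Sᶜ) K)) =
        sumToIter K (Fin 4) ↥Sᶜ := by
      apply MvPolynomial.ringHom_ext
      · intro r; simp [sumToIter_C]
      · rintro (i|i) <;> simp [sumToIter_Xl, sumToIter_Xr]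
    exact RingHom.congr_fun hext q
  have hΦX : ∀ i : Fin 4, Φ (X (ι i)) = X i := by
    intro i
    have h1 : e.symm (ι i) = Sum.inl i := by
      rw [Equiv.symm_apply_eq]; exact (heinl i).symm
    simp [hΦ, renameEquiv_apply, rename_X, h1, hsum, sumToIter_Xl]
  have hΦT : ∀ t ∈ T, ∃ u : C', Φ t = MvPolynomial.C u := by
    intro t ht
    obtain ⟨u, rfl⟩ := hT t ht
    refine ⟨u, ?_⟩
    have h1 : (⇑e.symm ∘ (Subtype.val : ↥Sᶜ → σ)) = Sum.inr := by
      funext x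
      rw [Function.comp_apply, Equiv.symm_apply_eq]; exact (heinr x).symm
    have h2 := congrArg (fun ψ => ψ u) (sumAlgEquiv_comp_rename_inr K (Fin 4) ↥Sᶜ)
    simp only [AlgHom.coe_comp, Function.comp_apply, AlgEquiv.toAlgHom_eq_coe,
      AlgHom.coe_coe] at h2
    simp only [hΦ, AlgEquiv.trans_apply, renameEquiv_apply, rename_rename, h1, h2]
    refine h2.trans ?_
    rw [IsScalarTower.coe_toAlgHom', ← MvPolynomial.algebraMap_eq]
  set ΦR : MvPolynomial σ K →+* MvPolynomial (Fin 4) C' := (Φ : MvPolynomial σ K →+* MvPolynomial (Fin 4) C') with hΦR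
  set U : Set C' := (MvPolynomial.C (σ := Fin 4)) ⁻¹' (⇑ΦR '' T) with hU
  have himg : ⇑ΦR '' T = MvPolynomial.C (σ := Fin 4) '' U := by
    apply Set.Subset.antisymm
    · rintro x ⟨t, ht, rfl⟩
      obtain ⟨u, hu⟩ := hΦT t ht
      refine ⟨u, ?_, hu.symm⟩
      rw [hU, Set.mem_preimage, ← hu]
      exact ⟨t, ht, rfl⟩
    · rintro x ⟨u, hu, rfl⟩
      exact hu
  set J0 : Ideal C' := Ideal.span U with hJ0
  set J' : Ideal (MvPolynomial (Fin 4) C') :=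
    Ideal.map (MvPolynomial.C : C' →+* MvPolynomial (Fin 4) C') J0 with hJ'
  have hmap : Ideal.map ΦR (Ideal.span T) = J' := by
    rw [hJ', hJ0, Ideal.map_span, Ideal.map_span, himg]
  have hmem : ∀ x : MvPolynomial σ K,
      x ∈ Ideal.span T ↔ ΦR x ∈ Ideal.map ΦR (Ideal.span T) := by
    intro x
    constructor
    · exact fun hx => Ideal.mem_map_of_mem _ hx
    · intro hx
      obtain ⟨y, hy, hyx⟩ := (Ideal.mem_map_iff_of_surjective ΦR Φ.surjective).mp hx
      rwa [← Φ.injective hyx]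
  set Θ := MvPolynomial.quotientEquivQuotientMvPolynomial (σ := Fin 4) J0 with hΘ
  have hΘX : ∀ i : Fin 4, Θ (X i) = Ideal.Quotient.mk J' (X i) := by
    intro i
    simp [hΘ, MvPolynomial.quotientEquivQuotientMvPolynomial, hJ']
    rfl
  have key : ∀ s' : MvPolynomial (Fin 4) C',
      (X 1 * X 2 - X 0 * X 3) * s' ∈ J' → s' ∈ J' := by
    intro s' hs'
    set q := Θ.symm (Ideal.Quotient.mk J' s') with hq
    have hq' : Θ q = Ideal.Quotient.mk J' s' := by rw [hq, AlgEquiv.apply_symm_apply]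
    have hg : Θ (X 1 * X 2 - X 0 * X 3) = Ideal.Quotient.mk J' (X 1 * X 2 - X 0 * X 3) := by
      have h1 : Ideal.Quotient.mk J' (X 1 * X 2 - X 0 * X 3) =
          Ideal.Quotient.mk J' (X 1) * Ideal.Quotient.mk J' (X 2) -
            Ideal.Quotient.mk J' (X 0) * Ideal.Quotient.mk J' (X 3) := by
        rw [(Ideal.Quotient.mk J').map_sub, (Ideal.Quotient.mk J').map_mul,
          (Ideal.Quotient.mk J').map_mul]
      rw [map_sub, map_mul, map_mul, hΘX, hΘX, hΘX, hΘX, h1]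
    have h0 : Θ ((X 1 * X 2 - X 0 * X 3) * q) = 0 := by
      rw [map_mul, hg, hq', ← map_mul, Ideal.Quotient.eq_zero_iff_mem]
      exact hs'
    have h0' : (X 1 * X 2 - X 0 * X 3 : MvPolynomial (Fin 4) (C' ⧸ J0)) * q = 0 := by
      apply Θ.injective; rw [h0, map_zero]
    have hq0 : q = 0 := by
      refine binom_regular (a := (0 : Fin 4)) (b := 1) (c := 2) (d := 3)
        (by decide) (by decide) (by decide) (by decide) (by decide) h0'
    have hmk : Ideal.Quotient.mk J' s' = 0 := by rw [← hq', hq0, map_zero]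
    exact Ideal.Quotient.eq_zero_iff_mem.mp hmk
  have hΦb : ΦR (X b) = X 1 := by
    exact (show Φ (X b) = X 1 by simpa [hι] using hΦX 1)
  have hΦc : ΦR (X c) = X 2 := by
    exact (show Φ (X c) = X 2 by simpa [hι] using hΦX 2)
  have hΦa : ΦR (X a) = X 0 := by
    exact (show Φ (X a) = X 0 by simpa [hι] using hΦX 0)
  have hΦd : ΦR (X d) = X 3 := by
    exact (show Φ (X d) = X 3 by simpa [hι] using hΦX 3)
  have hΦg : ΦR (X b * X c - X a * X d) = X 1 * X 2 - X 0 * X 3 := by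
    rw [map_sub, map_mul, map_mul, hΦa, hΦb, hΦc, hΦd]
  rw [hmem s, hmap]
  apply key
  rw [← hΦg, ← map_mul]
  rw [hmem _, hmap] at h
  exact h



namespace ConeAux

variable {σ K : Type*} [Field K] {J : Ideal (MvPolynomial σ K)}

/-- rank of the shifted summand -/
def prevR (F : MinimalGradedFreeResolution J) : ℕ → ℕ
  | 0 => 0
  | j + 1 => F.rank j

def rank' (F : MinimalGradedFreeResolution J) (i : ℕ) : ℕ := F.rank i + prevR F i

noncomputable def E (F : MinimalGradedFreeResolution J) (i : ℕ) :
    (Fin (rank' F i) →₀ MvPolynomial σ K) ≃ₗ[MvPolynomial σ K]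
      (Fin (F.rank i) →₀ MvPolynomial σ K) × (Fin (prevR F i) →₀ MvPolynomial σ K) :=
  (Finsupp.domLCongr finSumFinEquiv.symm).trans
    (Finsupp.sumFinsuppLEquivProdFinsupp (MvPolynomial σ K))

noncomputable def dprev (F : MinimalGradedFreeResolution J) :
    (i : ℕ) → (Fin (prevR F (i + 1)) →₀ MvPolynomial σ K) →ₗ[MvPolynomial σ K]
      (Fin (prevR F i) →₀ MvPolynomial σ K)
  | 0 => 0
  | j + 1 => F.d j

noncomputable def gmap (F : MinimalGradedFreeResolution J) (g : MvPolynomial σ K) (i : ℕ) :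
    (Fin (prevR F (i + 1)) →₀ MvPolynomial σ K) →ₗ[MvPolynomial σ K]
      (Fin (F.rank i) →₀ MvPolynomial σ K) :=
  g • (LinearMap.id : (Fin (prevR F (i + 1)) →₀ MvPolynomial σ K) →ₗ[MvPolynomial σ K]
      (Fin (F.rank i) →₀ MvPolynomial σ K))

noncomputable def δ (F : MinimalGradedFreeResolution J) (g : MvPolynomial σ K) (i : ℕ) :
    ((Fin (F.rank (i+1)) →₀ MvPolynomial σ K) × (Fin (prevR F (i+1)) →₀ MvPolynomial σ K))
      →ₗ[MvPolynomial σ K]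
    ((Fin (F.rank i) →₀ MvPolynomial σ K) × (Fin (prevR F i) →₀ MvPolynomial σ K)) :=
  LinearMap.prod
    ((F.d i).comp (LinearMap.fst _ _ _) + (gmap F g i).comp (LinearMap.snd _ _ _))
    (-((dprev F i).comp (LinearMap.snd _ _ _)))

noncomputable def d' (F : MinimalGradedFreeResolution J) (g : MvPolynomial σ K) (i : ℕ) :
    (Fin (rank' F (i+1)) →₀ MvPolynomial σ K) →ₗ[MvPolynomial σ K]
      (Fin (rank' F i) →₀ MvPolynomial σ K) :=
  ((E F i).symm.toLinearMap).comp ((δ F g i).comp (E F (i+1)).toLinearMap)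

noncomputable def π (g : MvPolynomial σ K) (J : Ideal (MvPolynomial σ K)) :
    (MvPolynomial σ K ⧸ J) →ₗ[MvPolynomial σ K]
      (MvPolynomial σ K ⧸ (J ⊔ Ideal.span {g})) :=
  Submodule.liftQ _ (Submodule.mkQ _) (by
    rw [Submodule.ker_mkQ]
    exact le_sup_left)

noncomputable def augP (F : MinimalGradedFreeResolution J) (g : MvPolynomial σ K) :
    ((Fin (F.rank 0) →₀ MvPolynomial σ K) × (Fin (prevR F 0) →₀ MvPolynomial σ K))
      →ₗ[MvPolynomial σ K] (MvPolynomial σ K ⧸ (J ⊔ Ideal.span {g})) :=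
  (π g J).comp (F.aug.comp (LinearMap.fst _ _ _))

noncomputable def aug' (F : MinimalGradedFreeResolution J) (g : MvPolynomial σ K) :
    (Fin (rank' F 0) →₀ MvPolynomial σ K) →ₗ[MvPolynomial σ K]
      (MvPolynomial σ K ⧸ (J ⊔ Ideal.span {g})) :=
  (augP F g).comp (E F 0).toLinearMap

variable (F : MinimalGradedFreeResolution J) (g : MvPolynomial σ K)

lemma δ_apply (i : ℕ) (x : Fin (F.rank (i+1)) →₀ MvPolynomial σ K)
    (y : Fin (F.rank i) →₀ MvPolynomial σ K) :
    δ F g i (x, y) = (F.d i x + g • y, -(dprev F i y)) := rfl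

lemma dprev_succ (j : ℕ) : dprev F (j+1) = F.d j := rfl

lemma dprev_zero : dprev F 0 = 0 := rfl

lemma dd_zero (i : ℕ) (x : Fin (F.rank (i+2)) →₀ MvPolynomial σ K) :
    F.d i (F.d (i+1) x) = 0 := by
  have h1 : F.d (i+1) x ∈ LinearMap.ker (F.d i) := by
    rw [← F.exact i]; exact LinearMap.mem_range_self _ x
  exact h1

lemma ker_d_eq (i : ℕ) (y : Fin (F.rank (i+1)) →₀ MvPolynomial σ K) (hy : F.d i y = 0) :
    ∃ x, F.d (i+1) x = y := by
  have : y ∈ LinearMap.range (F.d (i+1)) := by rw [F.exact i]; exact hy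
  exact this

lemma aug_d_zero (x : Fin (F.rank 1) →₀ MvPolynomial σ K) : F.aug (F.d 0 x) = 0 := by
  have h1 : F.d 0 x ∈ LinearMap.ker F.aug := by
    rw [← F.exact_zero]; exact LinearMap.mem_range_self _ x
  exact h1

lemma ker_aug_eq (y : Fin (F.rank 0) →₀ MvPolynomial σ K) (hy : F.aug y = 0) :
    ∃ x, F.d 0 x = y := by
  have : y ∈ LinearMap.range (F.d 0) := by rw [F.exact_zero]; exact hy
  exact this

lemma exact_deltaP (hgreg : ∀ s, g * s ∈ J → s ∈ J) (i : ℕ) :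
    LinearMap.range (δ F g (i+1)) = LinearMap.ker (δ F g i) := by
  apply le_antisymm
  · rintro _ ⟨⟨x, w⟩, rfl⟩
    rw [LinearMap.mem_ker, show δ F g i (δ F g (i+1) (x, w)) = (F.d i ((F.d (i+1)) x +
      g • (show Fin (F.rank (i+1)) →₀ MvPolynomial σ K from w)) +
      g • (show Fin (F.rank i) →₀ MvPolynomial σ K from -(dprev F (i+1) w)),
      -(dprev F i (-(dprev F (i+1) w)))) from rfl, Prod.mk_eq_zero]
    constructor
    · show F.d i ((F.d (i+1)) x + g • (show Fin (F.rank (i+1)) →₀ MvPolynomial σ K from w)) +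
          g • (show Fin (F.rank i) →₀ MvPolynomial σ K from -(dprev F (i+1) w)) = 0
      rw [map_add, map_smul, dd_zero, zero_add]
      erw [smul_neg]
      exact add_neg_cancel _
    · rw [neg_eq_zero]
      match i with
      | 0 => rfl
      | j + 1 =>
        show F.d j (-(F.d (j+1) (show Fin (F.rank (j+2)) →₀ _ from w))) = 0
        rw [map_neg, dd_zero, neg_zero]
  · rintro ⟨u, y⟩ hk
    rw [LinearMap.mem_ker, show δ F g i (u, y) = (F.d i u +
      g • (show Fin (F.rank i) →₀ MvPolynomial σ K from y), -(dprev F i y)) from rfl,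
      Prod.mk_eq_zero, neg_eq_zero] at hk
    obtain ⟨h1, h2⟩ := hk
    match i with
    | 0 =>
      have h3 := congrArg F.aug h1
      rw [map_add, map_zero, aug_d_zero, zero_add, map_smul] at h3
      obtain ⟨s, hs⟩ := Submodule.Quotient.mk_surjective
        (J : Submodule (MvPolynomial σ K) (MvPolynomial σ K))
        (F.aug (show Fin (F.rank 0) →₀ _ from y))
      rw [← hs] at h3
      have h4 : (Submodule.Quotient.mk (g * s) : MvPolynomial σ K ⧸ J) = 0 := by
        rw [← smul_eq_mul, Submodule.Quotient.mk_smul]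
        exact h3
      rw [Submodule.Quotient.mk_eq_zero] at h4
      have h6 : F.aug (show Fin (F.rank 0) →₀ _ from y) = 0 := by
        rw [← hs, Submodule.Quotient.mk_eq_zero]
        exact hgreg s h4
      obtain ⟨w, hw⟩ := ker_aug_eq F _ h6
      have h7 : F.d 0 (u + g • w) = 0 := by
        rw [map_add, map_smul, hw]
        exact h1
      obtain ⟨x, hx⟩ := ker_d_eq F 0 _ h7
      refine ⟨(x, -w), ?_⟩
      rw [δ_apply]
      have c1 : F.d 1 x + g • (-w) = u := by rw [smul_neg, hx]; abel
      have c2 : -(dprev F 1 (-w)) = y := by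
        show -(F.d 0 (-w)) = _
        rw [map_neg, neg_neg, hw]
      rw [c1, c2]
    | j + 1 =>
      have h2' : F.d j (show Fin (F.rank (j+1)) →₀ _ from y) = 0 := h2
      obtain ⟨w, hw⟩ := ker_d_eq F j _ h2'
      have h7 : F.d (j+1) (u + g • w) = 0 := by
        rw [map_add, map_smul, hw]
        exact h1
      obtain ⟨x, hx⟩ := ker_d_eq F (j+1) _ h7
      refine ⟨(x, -w), ?_⟩
      rw [δ_apply]
      have c1 : F.d (j+2) x + g • (-w) = u := by rw [smul_neg, hx]; abel
      have c2 : -(dprev F (j+2) (-w)) = y := by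
        show -(F.d (j+1) (-w)) = _
        rw [map_neg, neg_neg, hw]
      rw [c1, c2]

lemma π_mk (s : MvPolynomial σ K) :
    π g J (Submodule.Quotient.mk s) = Submodule.Quotient.mk s := rfl

lemma smul_g_quot_zero (q : MvPolynomial σ K ⧸ (J ⊔ Ideal.span {g})) : g • q = 0 := by
  obtain ⟨s, rfl⟩ := Submodule.Quotient.mk_surjective _ q
  rw [← Submodule.Quotient.mk_smul, Submodule.Quotient.mk_eq_zero]
  have hg : g ∈ J ⊔ Ideal.span {g} :=
    le_sup_right (α := Ideal (MvPolynomial σ K)) (Ideal.subset_span rfl)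
  have : g * s ∈ J ⊔ Ideal.span {g} := Ideal.mul_mem_right s _ hg
  rwa [smul_eq_mul]

lemma exact_zeroP (hgreg : ∀ s, g * s ∈ J → s ∈ J) :
    LinearMap.range (δ F g 0) = LinearMap.ker (augP F g) := by
  apply le_antisymm
  · rintro _ ⟨⟨x, w⟩, rfl⟩
    rw [LinearMap.mem_ker]
    have h1 : augP F g (δ F g 0 (x, w)) =
        π g J (F.aug (F.d 0 x + g • (show Fin (F.rank 0) →₀ _ from w))) := rfl
    rw [h1, map_add, aug_d_zero, zero_add, map_smul, map_smul, smul_g_quot_zero]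
  · rintro ⟨u, y⟩ hk
    have hy : y = 0 := Finsupp.ext fun a => (show Fin 0 from a).elim0
    have hk' : π g J (F.aug u) = 0 := hk
    have hker : F.aug u ∈ Submodule.map (Submodule.mkQ (J : Submodule (MvPolynomial σ K)
        (MvPolynomial σ K))) ((J ⊔ Ideal.span {g} : Ideal (MvPolynomial σ K)) :
          Submodule (MvPolynomial σ K) (MvPolynomial σ K)) := by
      have : LinearMap.ker (π g J) = Submodule.map (Submodule.mkQ _)
          ((J ⊔ Ideal.span {g} : Ideal (MvPolynomial σ K)) :
            Submodule (MvPolynomial σ K) (MvPolynomial σ K)) := by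
        rw [π, Submodule.ker_liftQ, Submodule.ker_mkQ]
      rw [← this]; exact hk'
    obtain ⟨s, hsmem, hs⟩ := hker
    obtain ⟨j, hj, t, ht, rfl⟩ := Submodule.mem_sup.mp hsmem
    obtain ⟨r, rfl⟩ := Ideal.mem_span_singleton'.mp ht
    obtain ⟨z, hz⟩ := F.aug_surjective (Submodule.Quotient.mk r)
    have haug : F.aug (u - g • z) = 0 := by
      rw [map_sub, map_smul, hz, ← hs, Submodule.mkQ_apply, Submodule.Quotient.mk_add]
      have hj0 : (Submodule.Quotient.mk j : MvPolynomial σ K ⧸ J) = 0 := by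
        rw [Submodule.Quotient.mk_eq_zero]; exact hj
      have h10 : g • (Submodule.Quotient.mk r : MvPolynomial σ K ⧸ J)
          = Submodule.Quotient.mk (r * g) := by
        rw [← Submodule.Quotient.mk_smul, smul_eq_mul, mul_comm]
      rw [hj0, zero_add, h10, sub_self]
    obtain ⟨x, hx⟩ := ker_aug_eq F _ haug
    refine ⟨(x, z), ?_⟩
    rw [δ_apply, dprev_zero, hy]
    have : F.d 0 x + g • z = u := by rw [hx]; abel
    rw [this]
    simp
    rfl

lemma augP_surj : Function.Surjective (augP F g) := by
  intro q
  obtain ⟨s, rfl⟩ := Submodule.Quotient.mk_surjective _ q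
  obtain ⟨z, hz⟩ := F.aug_surjective (Submodule.Quotient.mk s)
  exact ⟨(z, 0), by show π g J (F.aug z) = _; rw [hz, π_mk]⟩

lemma exact_d' (hgreg : ∀ s, g * s ∈ J → s ∈ J) (i : ℕ) :
    LinearMap.range (d' F g (i+1)) = LinearMap.ker (d' F g i) := by
  ext z
  simp only [LinearMap.mem_range, LinearMap.mem_ker, d', LinearMap.comp_apply,
    LinearEquiv.coe_coe]
  constructor
  · rintro ⟨y, rfl⟩
    rw [LinearEquiv.apply_symm_apply]
    have h1 : δ F g (i+1) (E F (i+2) y) ∈ LinearMap.ker (δ F g i) := by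
      rw [← exact_deltaP F g hgreg i]
      exact LinearMap.mem_range_self _ _
    rw [LinearMap.mem_ker] at h1
    rw [h1, map_zero]
  · intro hz
    have h1 : δ F g i (E F (i+1) z) = 0 := by
      have h2 := congrArg (E F i) hz
      rwa [LinearEquiv.apply_symm_apply, map_zero] at h2
    have h2 : E F (i+1) z ∈ LinearMap.range (δ F g (i+1)) := by
      rw [exact_deltaP F g hgreg i]
      exact h1
    obtain ⟨p, hp⟩ := h2
    exact ⟨(E F (i+2)).symm p, by
      rw [LinearEquiv.apply_symm_apply, hp, LinearEquiv.symm_apply_apply]⟩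

lemma exact_zero' (hgreg : ∀ s, g * s ∈ J → s ∈ J) :
    LinearMap.range (d' F g 0) = LinearMap.ker (aug' F g) := by
  ext z
  simp only [LinearMap.mem_range, LinearMap.mem_ker, d', aug', LinearMap.comp_apply,
    LinearEquiv.coe_coe]
  constructor
  · rintro ⟨y, rfl⟩
    rw [LinearEquiv.apply_symm_apply]
    have h1 : δ F g 0 (E F 1 y) ∈ LinearMap.ker (augP F g) := by
      rw [← exact_zeroP F g hgreg]
      exact LinearMap.mem_range_self _ _
    exact h1
  · intro hz
    have h2 : E F 0 z ∈ LinearMap.range (δ F g 0) := by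
      rw [exact_zeroP F g hgreg]
      exact hz
    obtain ⟨p, hp⟩ := h2
    exact ⟨(E F 1).symm p, by
      rw [LinearEquiv.apply_symm_apply, hp, LinearEquiv.symm_apply_apply]⟩

lemma aug'_surj : Function.Surjective (aug' F g) := by
  have h1 := augP_surj F g
  intro q
  obtain ⟨p, hp⟩ := h1 q
  exact ⟨(E F 0).symm p, by
    show augP F g (E F 0 ((E F 0).symm p)) = q
    rw [LinearEquiv.apply_symm_apply, hp]⟩

-- entry computations
lemma E_fst (i : ℕ) (Z : Fin (rank' F i) →₀ MvPolynomial σ K) (a : Fin (F.rank i)) :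
    (E F i Z).1 a = Z (finSumFinEquiv (Sum.inl a)) := by
  show (Finsupp.sumFinsuppEquivProdFinsupp
    (Finsupp.equivMapDomain finSumFinEquiv.symm Z)).1 a = _
  rw [Finsupp.fst_sumFinsuppEquivProdFinsupp]
  rfl

lemma E_snd (i : ℕ) (Z : Fin (rank' F i) →₀ MvPolynomial σ K) (b : Fin (prevR F i)) :
    (E F i Z).2 b = Z (finSumFinEquiv (Sum.inr b)) := by
  show (Finsupp.sumFinsuppEquivProdFinsupp
    (Finsupp.equivMapDomain finSumFinEquiv.symm Z)).2 b = _
  rw [Finsupp.snd_sumFinsuppEquivProdFinsupp]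
  rfl

lemma Esymm_inl (i : ℕ) (P : (Fin (F.rank i) →₀ MvPolynomial σ K) ×
    (Fin (prevR F i) →₀ MvPolynomial σ K)) (a : Fin (F.rank i)) :
    ((E F i).symm P) (finSumFinEquiv (Sum.inl a)) = P.1 a := by
  rw [← E_fst F i ((E F i).symm P) a, LinearEquiv.apply_symm_apply]

lemma Esymm_inr (i : ℕ) (P : (Fin (F.rank i) →₀ MvPolynomial σ K) ×
    (Fin (prevR F i) →₀ MvPolynomial σ K)) (b : Fin (prevR F i)) :
    ((E F i).symm P) (finSumFinEquiv (Sum.inr b)) = P.2 b := by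
  rw [← E_snd F i ((E F i).symm P) b, LinearEquiv.apply_symm_apply]

lemma E_single_inl (i : ℕ) (a : Fin (F.rank i)) (c : MvPolynomial σ K) :
    E F i (Finsupp.single (finSumFinEquiv (Sum.inl a)) c) = (Finsupp.single a c, 0) := by
  apply Prod.ext
  · refine Finsupp.ext fun j => ?_
    rw [E_fst]
    exact (Finsupp.single_apply_left finSumFinEquiv.injective _ _ _).trans
      (Finsupp.single_apply_left Sum.inl_injective _ _ _)
  · refine Finsupp.ext fun j => ?_
    rw [E_snd]
    exact (Finsupp.single_apply_left finSumFinEquiv.injective _ _ _).trans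
      (Finsupp.single_eq_of_ne (by simp))

lemma E_single_inr (i : ℕ) (b : Fin (prevR F i)) (c : MvPolynomial σ K) :
    E F i (Finsupp.single (finSumFinEquiv (Sum.inr b)) c) = (0, Finsupp.single b c) := by
  apply Prod.ext
  · refine Finsupp.ext fun j => ?_
    rw [E_fst]
    exact (Finsupp.single_apply_left finSumFinEquiv.injective _ _ _).trans
      (Finsupp.single_eq_of_ne (by simp))
  · refine Finsupp.ext fun j => ?_
    rw [E_snd]
    exact (Finsupp.single_apply_left finSumFinEquiv.injective _ _ _).trans
      (Finsupp.single_apply_left Sum.inr_injective _ _ _)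

lemma d'_single_inl (i : ℕ) (k : Fin (F.rank (i+1))) :
    d' F g i (Finsupp.single (finSumFinEquiv (Sum.inl k)) 1) =
      (E F i).symm (F.d i (Finsupp.single k 1), 0) := by
  show (E F i).symm (δ F g i (E F (i+1) (Finsupp.single (finSumFinEquiv (Sum.inl k)) 1))) = _
  erw [E_single_inl, δ_apply]
  congr 1
  apply Prod.ext
  · show F.d i (Finsupp.single k 1) + g • (0 : Fin (F.rank i) →₀ MvPolynomial σ K) = _
    rw [smul_zero, add_zero]
  · show -(dprev F i 0) = (0 : Fin (prevR F i) →₀ MvPolynomial σ K)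
    rw [map_zero, neg_zero]

lemma d'_single_inr (i : ℕ) (k : Fin (prevR F (i+1))) :
    d' F g i (Finsupp.single (finSumFinEquiv (Sum.inr k)) 1) =
      (E F i).symm (g • Finsupp.single (show Fin (F.rank i) from k) 1,
        -(dprev F i (Finsupp.single k 1))) := by
  show (E F i).symm (δ F g i (E F (i+1) (Finsupp.single (finSumFinEquiv (Sum.inr k)) 1))) = _
  erw [E_single_inr, δ_apply]
  congr 1
  apply Prod.ext
  · show F.d i 0 + g • (Finsupp.single (show Fin (F.rank i) from k) 1) = _
    rw [map_zero, zero_add]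
  · rfl

lemma entry_homog (htw : ∀ i k, F.twist i k = 2 * i) (i : ℕ)
    (k : Fin (F.rank (i+1))) (l : Fin (F.rank i)) :
    (F.d i (Finsupp.single k 1) l).IsHomogeneous 2 := by
  obtain ⟨m, hm, he⟩ := F.graded i k l
  have hm2 : m = 2 := by rw [htw, htw] at he; omega
  rwa [hm2] at hm

lemma homog_neg {p : MvPolynomial σ K} {n : ℕ} (hp : p.IsHomogeneous n) :
    (-p).IsHomogeneous n := by
  rw [← zero_sub]
  exact (isHomogeneous_zero _ _ _).sub hp

lemma homog_coeff0 {p : MvPolynomial σ K} (hp : p.IsHomogeneous 2) :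
    MvPolynomial.coeff 0 p = 0 := by
  apply hp.coeff_eq_zero
  simp [Finsupp.degree]

noncomputable def coneRes (htw : ∀ i k, F.twist i k = 2 * i) (hg : g.IsHomogeneous 2)
    (hgreg : ∀ s, g * s ∈ J → s ∈ J) :
    MinimalGradedFreeResolution (J ⊔ Ideal.span {g}) where
  rank := rank' F
  twist := fun i _ => 2 * i
  d := d' F g
  aug := aug' F g
  rank_zero := by
    show F.rank 0 + prevR F 0 = 1
    have : prevR F 0 = 0 := rfl
    rw [this, Nat.add_zero, F.rank_zero]
  twist_zero := fun _ => rfl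
  aug_surjective := aug'_surj F g
  exact_zero := exact_zero' F g hgreg
  exact := exact_d' F g hgreg
  graded := by
    intro i k l
    refine ⟨2, ?_, by show 2 * (i+1) = 2 * i + 2; omega⟩
    obtain ⟨kk, rfl⟩ : ∃ kk, finSumFinEquiv kk = k :=
      ⟨finSumFinEquiv.symm k, Equiv.apply_symm_apply _ _⟩
    obtain ⟨ll, rfl⟩ : ∃ ll, finSumFinEquiv ll = l :=
      ⟨finSumFinEquiv.symm l, Equiv.apply_symm_apply _ _⟩
    cases kk with
    | inl k' =>
      cases ll with
      | inl l' =>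
        rw [d'_single_inl, Esymm_inl]
        exact entry_homog F htw i k' l'
      | inr l' =>
        rw [d'_single_inl, Esymm_inr]
        exact isHomogeneous_zero _ _ _
    | inr k' =>
      cases ll with
      | inl l' =>
        rw [d'_single_inr, Esymm_inl]
        show ((g • Finsupp.single (show Fin (F.rank i) from k') (1 : MvPolynomial σ K)) l'
          ).IsHomogeneous 2
        rw [Finsupp.smul_apply]
        by_cases hkl : (show Fin (F.rank i) from k') = l'
        · rw [Finsupp.single_apply, if_pos hkl, smul_eq_mul, mul_one]
          exact hg
        · rw [Finsupp.single_apply, if_neg hkl, smul_zero]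
          exact isHomogeneous_zero _ _ _
      | inr l' =>
        rw [d'_single_inr, Esymm_inr]
        show ((-(dprev F i (Finsupp.single k' 1))) l').IsHomogeneous 2
        rw [Finsupp.neg_apply]
        match i with
        | 0 => exact (show Fin 0 from l').elim0
        | j + 1 =>
          exact homog_neg (entry_homog F htw j k' l')
  minimal := by
    intro i k l
    obtain ⟨kk, rfl⟩ : ∃ kk, finSumFinEquiv kk = k :=
      ⟨finSumFinEquiv.symm k, Equiv.apply_symm_apply _ _⟩
    obtain ⟨ll, rfl⟩ : ∃ ll, finSumFinEquiv ll = l :=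
      ⟨finSumFinEquiv.symm l, Equiv.apply_symm_apply _ _⟩
    cases kk with
    | inl k' =>
      cases ll with
      | inl l' =>
        rw [d'_single_inl, Esymm_inl]
        exact F.minimal i k' l'
      | inr l' =>
        rw [d'_single_inl, Esymm_inr]
        rfl
    | inr k' =>
      cases ll with
      | inl l' =>
        rw [d'_single_inr, Esymm_inl]
        show MvPolynomial.coeff 0 ((g • Finsupp.single (show Fin (F.rank i) from k')
          (1 : MvPolynomial σ K)) l') = 0
        rw [Finsupp.smul_apply]
        by_cases hkl : (show Fin (F.rank i) from k') = l'
        · rw [Finsupp.single_apply, if_pos hkl, smul_eq_mul, mul_one]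
          exact homog_coeff0 hg
        · rw [Finsupp.single_apply, if_neg hkl, smul_zero]
          rfl
      | inr l' =>
        rw [d'_single_inr, Esymm_inr]
        show MvPolynomial.coeff 0 ((-(dprev F i (Finsupp.single k' 1))) l') = 0
        rw [Finsupp.neg_apply]
        match i with
        | 0 => exact (show Fin 0 from l').elim0
        | j + 1 =>
          rw [MvPolynomial.coeff_neg, neg_eq_zero]
          exact F.minimal j k' l'

lemma coneRes_rank_zero (htw) (hg) (hgreg) :
    (coneRes F g htw hg hgreg).rank 0 = F.rank 0 := by
  show F.rank 0 + prevR F 0 = F.rank 0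
  rfl

lemma coneRes_rank_succ (htw) (hg) (hgreg) (i : ℕ) :
    (coneRes F g htw hg hgreg).rank (i+1) = F.rank (i+1) + F.rank i := rfl

lemma coneRes_twist (htw) (hg) (hgreg) (i : ℕ) (k) :
    (coneRes F g htw hg hgreg).twist i k = 2 * i := rfl

end ConeAux

open ConeAux

section Base
variable {σ K : Type*} [Field K]

/-- resolution of S/0 -/
noncomputable def baseRes : MinimalGradedFreeResolution (⊥ : Ideal (MvPolynomial σ K)) where
  rank := fun i => match i with | 0 => 1 | _ + 1 => 0
  twist := fun i _ => 2 * i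
  d := fun _ => 0
  aug := (Submodule.mkQ _).comp (Finsupp.lapply (0 : Fin 1))
  rank_zero := rfl
  twist_zero := fun _ => rfl
  aug_surjective := by
    intro q
    obtain ⟨s, rfl⟩ := Submodule.Quotient.mk_surjective _ q
    exact ⟨Finsupp.single 0 s, by
      show Submodule.mkQ _ ((Finsupp.single (0 : Fin 1) s) 0) = _
      rw [Finsupp.single_eq_same, Submodule.mkQ_apply]⟩
  exact_zero := by
    apply le_antisymm
    · rintro _ ⟨x, rfl⟩
      simp
    · intro z hz
      rw [LinearMap.mem_ker] at hz
      have h1 : z 0 ∈ (⊥ : Ideal (MvPolynomial σ K)) := by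
        rw [← Submodule.Quotient.mk_eq_zero]
        exact hz
      rw [Ideal.mem_bot] at h1
      have h2 : z = 0 := Finsupp.ext fun a => by
        rw [Subsingleton.elim a 0, h1]; rfl
      rw [h2]
      exact Submodule.zero_mem _
  exact := by
    intro i
    apply le_antisymm
    · rintro _ ⟨x, rfl⟩
      simp
    · intro z _
      have h2 : z = 0 := Finsupp.ext fun a => (show Fin 0 from a).elim0
      rw [h2]
      exact Submodule.zero_mem _
  graded := fun i k _ => (show Fin 0 from k).elim0
  minimal := fun i k _ => (show Fin 0 from k).elim0

theorem exists_koszul : ∀ (n : ℕ) (f : Fin n → MvPolynomial σ K),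
    (∀ k, (f k).IsHomogeneous 2) →
    (∀ (k : Fin n) (s : MvPolynomial σ K),
        f k * s ∈ Ideal.span {p | ∃ j : Fin n, j < k ∧ p = f j} →
          s ∈ Ideal.span {p | ∃ j : Fin n, j < k ∧ p = f j}) →
    ∃ F : MinimalGradedFreeResolution (Ideal.span (Set.range f)),
      (∀ i, F.rank i = n.choose i) ∧ (∀ i k, F.twist i k = 2 * i) := by
  intro n
  induction n with
  | zero =>
    intro f _ _
    have h1 : Ideal.span (Set.range f) = (⊥ : Ideal (MvPolynomial σ K)) := by
      rw [Set.range_eq_empty, Ideal.span_empty]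
    rw [h1]
    refine ⟨baseRes, fun i => ?_, fun i k => rfl⟩
    match i with
    | 0 => rfl
    | i + 1 => rfl
  | succ n IH =>
    intro f hhom hreg
    set f' : Fin n → MvPolynomial σ K := f ∘ Fin.castSucc with hf'
    have hsets : ∀ k : Fin n, {p | ∃ j : Fin n, j < k ∧ p = f' j} =
        {p | ∃ j : Fin (n+1), j < Fin.castSucc k ∧ p = f j} := by
      intro k
      ext p
      constructor
      · rintro ⟨j, hj, rfl⟩
        exact ⟨Fin.castSucc j, by simpa using hj, rfl⟩
      · rintro ⟨j, hj, rfl⟩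
        have hjn : (j : ℕ) < n := lt_of_lt_of_le (by simpa [Fin.lt_def] using hj) (by
          have := k.2; omega)
        refine ⟨⟨j, hjn⟩, by simpa [Fin.lt_def] using hj, ?_⟩
        show f j = f' ⟨j, hjn⟩
        have hcast : Fin.castSucc ⟨j, hjn⟩ = j := Fin.ext (by simp)
        rw [hf', Function.comp_apply, hcast]
    have hregf' : ∀ (k : Fin n) (s : MvPolynomial σ K),
        f' k * s ∈ Ideal.span {p | ∃ j : Fin n, j < k ∧ p = f' j} →
          s ∈ Ideal.span {p | ∃ j : Fin n, j < k ∧ p = f' j} := by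
      intro k s hs
      rw [hsets k] at hs ⊢
      exact hreg (Fin.castSucc k) s hs
    obtain ⟨F, hrank, htw⟩ := IH f' (fun k => hhom _) hregf'
    set g : MvPolynomial σ K := f (Fin.last n) with hgdef
    have hglast : {p | ∃ j : Fin (n+1), j < Fin.last n ∧ p = f j} = Set.range f' := by
      ext p
      constructor
      · rintro ⟨j, hj, rfl⟩
        have hjn : (j : ℕ) < n := by simpa [Fin.lt_def] using hj
        refine ⟨⟨j, hjn⟩, ?_⟩
        show f (Fin.castSucc ⟨j, hjn⟩) = f j
        have hcast : Fin.castSucc ⟨j, hjn⟩ = j := Fin.ext (by simp)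
        rw [hcast]
      · rintro ⟨j, rfl⟩
        exact ⟨Fin.castSucc j, by simp [Fin.lt_def, j.2], rfl⟩
    have hgreg : ∀ s, g * s ∈ Ideal.span (Set.range f') → s ∈ Ideal.span (Set.range f') := by
      intro s hs
      rw [← hglast] at hs ⊢
      exact hreg (Fin.last n) s hs
    have hrange : Set.range f = Set.range f' ∪ {g} := by
      ext p
      constructor
      · rintro ⟨j, rfl⟩
        rcases Fin.eq_castSucc_or_eq_last j with ⟨j', rfl⟩ | rfl
        · exact Or.inl ⟨j', rfl⟩
        · exact Or.inr rfl
      · rintro (⟨j, rfl⟩ | hp)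
        · exact ⟨Fin.castSucc j, rfl⟩
        · exact ⟨Fin.last n, by rw [hp]⟩
    have hideal : Ideal.span (Set.range f) =
        Ideal.span (Set.range f') ⊔ Ideal.span {g} := by
      rw [hrange, Ideal.span_union]
    rw [hideal]
    refine ⟨coneRes F g htw (hhom _) hgreg, fun i => ?_, fun i k => rfl⟩
    match i with
    | 0 =>
      rw [coneRes_rank_zero, hrank, Nat.choose_zero_right, Nat.choose_zero_right]
    | i + 1 =>
      rw [coneRes_rank_succ, hrank, hrank, Nat.choose_succ_succ]
      show n.choose (i+1) + n.choose i = n.choose i + n.choose (i+1)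
      omega
end Base


section Helpers
lemma ideal_smul_top {R : Type*} [CommRing R] (J : Ideal R) :
    (J • (⊤ : Submodule R R)) = J := by
  apply le_antisymm
  · apply Submodule.smul_le.mpr
    intro r hr n _
    rw [smul_eq_mul]
    exact J.mul_mem_right n hr
  · intro x hx
    have h1 := Submodule.smul_mem_smul hx (Submodule.mem_top (x := (1 : R)))
    have h2 : x • (1 : R) = x := by rw [smul_eq_mul, mul_one]
    rwa [h2] at h1

lemma isSMulRegular_quot {R : Type*} [CommRing R] (J : Ideal R) (g : R)
    (h : ∀ s, g * s ∈ J → s ∈ J) :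
    IsSMulRegular (R ⧸ (J : Submodule R R)) g := by
  intro x y hxy
  obtain ⟨s, rfl⟩ := Submodule.Quotient.mk_surjective _ x
  obtain ⟨t, rfl⟩ := Submodule.Quotient.mk_surjective _ y
  have hxy' : (Submodule.Quotient.mk (g • s) : R ⧸ (J : Submodule R R))
      = Submodule.Quotient.mk (g • t) := by
    rw [Submodule.Quotient.mk_smul, Submodule.Quotient.mk_smul]
    exact hxy
  rw [Submodule.Quotient.eq] at hxy'
  rw [Submodule.Quotient.eq]
  have h2 : g * (s - t) ∈ J := by
    rw [mul_sub]
    simpa [smul_eq_mul] using hxy'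
  exact h (s - t) h2

lemma mem_take_ofFn {A : Type*} (r i : ℕ) (hir : i < r) (fn : Fin r → A) (p : A) :
    p ∈ (List.ofFn fn).take i ↔ ∃ j : Fin r, j < (⟨i, hir⟩ : Fin r) ∧ p = fn j := by
  rw [List.mem_take_iff_getElem]
  constructor
  · rintro ⟨j, hj, rfl⟩
    rw [List.length_ofFn, lt_min_iff] at hj
    rw [List.getElem_ofFn]
    exact ⟨⟨j, hj.2⟩, hj.1, rfl⟩
  · rintro ⟨j, hji, rfl⟩
    have hjl : (j : ℕ) < min i (List.ofFn fn).length := by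
      rw [List.length_ofFn, lt_min_iff]
      exact ⟨hji, j.2⟩
    refine ⟨j, hjl, ?_⟩
    rw [List.getElem_ofFn]
end Helpers

/-- The join-meet ideal of a cyclic distributive lattice with `r` squares
(squares `a → b → d`, `a → c → d` with `b, c` incomparable, on pairwise distinct
vertices; here `v k 0, v k 1, v k 2, v k 3` are `a, b, c, d` of the `k`-th square) is
generated by the `r` binomials `x_b x_c - x_a x_d`, which are homogeneous quadrics
forming a regular sequence; hence the regularity of `K[C]/I_C` equals `r`. -/
theorem stmt4 {σ K : Type*} [Field K] (r : ℕ) (v : Fin r → Fin 4 → σ)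
    (hinj : Function.Injective (fun p : Fin r × Fin 4 => v p.1 p.2))
    (I : Ideal (MvPolynomial σ K))
    (hI : I = Ideal.span {f | ∃ k : Fin r,
      f = X (v k 1) * X (v k 2) - X (v k 0) * X (v k 3)}) :
    (∀ k : Fin r,
      (X (v k 1) * X (v k 2) - X (v k 0) * X (v k 3) : MvPolynomial σ K).IsHomogeneous 2) ∧
    RingTheory.Sequence.IsRegular (MvPolynomial σ K)
      (List.ofFn (fun k : Fin r =>
        X (v k 1) * X (v k 2) - X (v k 0) * X (v k 3) : Fin r → MvPolynomial σ K)) ∧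
    HasRegularity I r := by
  classical
  set fn : Fin r → MvPolynomial σ K :=
    fun k => X (v k 1) * X (v k 2) - X (v k 0) * X (v k 3) with hfn
  have hvne : ∀ (j k : Fin r) (s t : Fin 4), (j, s) ≠ (k, t) → v j s ≠ v k t := by
    intro j k s t hne hEq
    exact hne (hinj hEq)
  have hhom : ∀ k : Fin r, (fn k).IsHomogeneous 2 := by
    intro k
    exact ((isHomogeneous_X K (v k 1)).mul (isHomogeneous_X K (v k 2))).sub
      ((isHomogeneous_X K (v k 0)).mul (isHomogeneous_X K (v k 3)))
  have hregk : ∀ (k : Fin r) (s : MvPolynomial σ K),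
      fn k * s ∈ Ideal.span {p | ∃ j : Fin r, j < k ∧ p = fn j} →
        s ∈ Ideal.span {p | ∃ j : Fin r, j < k ∧ p = fn j} := by
    intro k s hs
    refine quot_reg (a := v k 0) (b := v k 1) (c := v k 2) (d := v k 3)
      (hvne _ _ _ _ (by simp)) (hvne _ _ _ _ (by simp)) (hvne _ _ _ _ (by simp))
      (hvne _ _ _ _ (by simp)) (hvne _ _ _ _ (by simp)) (hvne _ _ _ _ (by simp))
      _ ?_ hs
    rintro t ⟨j, hjk, rfl⟩
    have hjne : ∀ s' t' : Fin 4, v j s' ≠ v k t' := by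
      intro s' t'
      apply hvne
      intro hEq
      rw [Prod.mk.injEq] at hEq
      exact absurd hEq.1 (ne_of_lt hjk)
    have hmem : ∀ s' : Fin 4, v j s' ∈ (({v k 0, v k 1, v k 2, v k 3} : Set σ))ᶜ := by
      intro s'
      simp only [Set.mem_compl_iff, Set.mem_insert_iff, Set.mem_singleton_iff]
      push_neg
      exact ⟨hjne s' 0, hjne s' 1, hjne s' 2, hjne s' 3⟩
    refine ⟨X ⟨v j 1, hmem 1⟩ * X ⟨v j 2, hmem 2⟩ - X ⟨v j 0, hmem 0⟩ * X ⟨v j 3, hmem 3⟩, ?_⟩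
    rw [map_sub, map_mul, map_mul, rename_X, rename_X, rename_X, rename_X]
  refine ⟨fun k => hhom k, ?_, ?_⟩
  · refine (RingTheory.Sequence.isRegular_iff _ _).mpr ⟨?_, ?_⟩
    · refine (RingTheory.Sequence.isWeaklyRegular_iff _ _).mpr ?_
      intro i hi
      have hir : i < r := by rwa [List.length_ofFn] at hi
      have hget : (List.ofFn fn)[i]'hi = fn ⟨i, hir⟩ := by
        rw [List.getElem_ofFn]
      have hsub : (Ideal.ofList ((List.ofFn fn).take i) •
          (⊤ : Submodule (MvPolynomial σ K) (MvPolynomial σ K))) =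
          ((Ideal.span {p | ∃ j : Fin r, j < (⟨i, hir⟩ : Fin r) ∧ p = fn j} :
            Ideal (MvPolynomial σ K)) :
              Submodule (MvPolynomial σ K) (MvPolynomial σ K)) := by
        rw [ideal_smul_top]
        show Ideal.span _ = Ideal.span _
        congr 1
        ext p
        exact mem_take_ofFn r i hir fn p
      rw [hget, hsub]
      exact isSMulRegular_quot _ _ (hregk ⟨i, hir⟩)
    · rw [ideal_smul_top]
      intro hTop
      have h1 : (1 : MvPolynomial σ K) ∈ Ideal.ofList (List.ofFn fn) := by
        rw [← hTop]
        trivial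
      have h2 : Ideal.ofList (List.ofFn fn) ≤
          RingHom.ker (constantCoeff : MvPolynomial σ K →+* K) := by
        apply Ideal.span_le.mpr
        intro p hp
        have hp' : p ∈ List.ofFn fn := hp
        rw [List.mem_ofFn] at hp'
        obtain ⟨k, rfl⟩ := hp'
        show constantCoeff (fn k) = 0
        rw [hfn]
        simp
      have h3 := h2 h1
      rw [RingHom.mem_ker, map_one] at h3
      exact one_ne_zero h3
  · have hIset : I = Ideal.span (Set.range fn) := by
      rw [hI]
      congr 1
      ext p
      constructor
      · rintro ⟨k, hk⟩
        exact ⟨k, hk.symm⟩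
      · rintro ⟨k, hk⟩
        exact ⟨k, hk.symm⟩
    rw [hIset]
    obtain ⟨F, hrank, htw⟩ := exists_koszul r fn hhom hregk
    have hrpos : 0 < F.rank r := by
      rw [hrank, Nat.choose_self]
      omega
    refine ⟨F, ?_, ⟨r, ⟨0, hrpos⟩, ?_⟩⟩
    · intro i k
      rw [htw]
      have hi : i ≤ r := by
        by_contra hgt
        have h0 : r.choose i = 0 := Nat.choose_eq_zero_of_lt (by omega)
        have hk2 : (k : ℕ) < r.choose i := lt_of_lt_of_eq k.2 (hrank i)
        omega
      omega
    · rw [htw]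
      omega
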